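/- Let [a,b] be a proper interval in S^d with l(a) ≠ l(b). Then [a,b] contains no flat step, i.e., for every c with a ⪯ c ≺ b, l(c) ≠ l(s(c)). -/

import Mathlib

open SimpleGraph

/-- Sorted list of the tuple set `S^d`: tuples with entries in {1,3} except
the last entry which is in {1,2,3,4}, of length between 1 and `d`,
listed in lexicographic order. -/
def Tl : ℕ → List (List ℕ)
  | 0 => []
  | k+1 => [[1]] ++ (Tl k).map (fun a => 1 :: a) ++ [[2], [3]]
            ++ (Tl k).map (fun a => 3 :: a) ++ [[4]]

/-- Strict lexicographic order on tuples (a proper prefix is smaller). -/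
def lexLt (a b : List ℕ) : Prop := List.Lex (· < ·) a b

def lexLe (a b : List ℕ) : Prop := a = b ∨ lexLt a b

/-- `v` is the successor of `u` in the lexicographic order on `S^d`. -/
def IsSucc (d : ℕ) (u v : List ℕ) : Prop :=
  v ∈ Tl d ∧ lexLt u v ∧ ∀ w ∈ Tl d, lexLt u w → lexLe v w

/-- The interval `[a,b]` in `S^d`. -/
def interval (d : ℕ) (a b : List ℕ) : Set (List ℕ) :=
  {c | c ∈ Tl d ∧ lexLe a c ∧ lexLe c b}

/-- `[a,b]` is a proper interval: no interior element has length `l(a)` or `l(b)`. -/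
def ProperInterval (d : ℕ) (a b : List ℕ) : Prop :=
  a ∈ Tl d ∧ b ∈ Tl d ∧ lexLe a b ∧
  ∀ c ∈ interval d a b, c ≠ a → c ≠ b →
    c.length ≠ a.length ∧ c.length ≠ b.length

/-- The set of left endpoints of flat steps of the interval `[a,b]`. -/
def flatSteps (d : ℕ) (a b : List ℕ) : Set (List ℕ) :=
  {c | c ∈ Tl d ∧ lexLe a c ∧ lexLt c b ∧ ∃ v, IsSucc d c v ∧ v.length = c.length}

/-- Vertices of `G_d`: elements of `S^d`, subdivision vertices, and centers. -/
inductive Vtx where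
  | elt : List ℕ → Vtx
  | sub : ℕ → Fin 2 → Vtx
  | ctr : ℕ → Vtx
deriving DecidableEq

/-- The path `P_d` as a list of vertices: the elements of `S^d` in order,
with two subdivision vertices between consecutive elements of equal length
and one otherwise. -/
def pathList (d : ℕ) : List Vtx :=
  ((Tl d).zipIdx.map Prod.swap).flatMap (fun p =>
    Vtx.elt p.2 :: (match (Tl d)[p.1 + 1]? with
      | none => []
      | some b =>
        if p.2.length = b.length then [Vtx.sub p.1 0, Vtx.sub p.1 1]
        else [Vtx.sub p.1 0]))

/-- `x` and `y` are consecutive in the list `l`. -/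
def ChainAdj {α : Type} (l : List α) (x y : α) : Prop :=
  ∃ i, (l[i]? = some x ∧ l[i+1]? = some y) ∨
       (l[i]? = some y ∧ l[i+1]? = some x)

/-- Adjacency from a center vertex. -/
def ctrAdj (d : ℕ) : Vtx → Vtx → Prop
  | Vtx.ctr k, Vtx.ctr m => k ≠ m ∧ 1 ≤ k ∧ k ≤ d ∧ 1 ≤ m ∧ m ≤ d
  | Vtx.ctr k, Vtx.elt a => 1 ≤ k ∧ k ≤ d ∧ a ∈ Tl d ∧ a.length = k
  | _, _ => False

/-- The vertex set of `G_d`. -/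
def VSet (d : ℕ) : Finset Vtx :=
  (pathList d).toFinset ∪ (Finset.Icc 1 d).image Vtx.ctr

def GdAdj (d : ℕ) (x y : Vtx) : Prop :=
  x ≠ y ∧ (ChainAdj (pathList d) x y ∨ ctrAdj d x y ∨ ctrAdj d y x)

/-- The graph `G_d`. -/
def Gd (d : ℕ) : SimpleGraph {x // x ∈ VSet d} where
  Adj x y := GdAdj d x.1 y.1
  symm := by
    constructor
    rintro x y ⟨hne, h⟩
    refine ⟨hne.symm, ?_⟩
    rcases h with ⟨i, hi⟩ | h | h
    · exact Or.inl ⟨i, hi.symm⟩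
    · exact Or.inr (Or.inr h)
    · exact Or.inr (Or.inl h)
  loopless := ⟨fun x h => h.1 rfl⟩

/-- A rank decomposition of a graph `G`: a finite cubic tree together with a
bijection from the vertices of `G` to the leaves of the tree. -/
structure RankDecomp {V : Type} [Fintype V] (G : SimpleGraph V) where
  t : Type
  fin : Fintype t
  tree : SimpleGraph t
  conn : tree.Connected
  acyc : tree.IsAcyclic
  two_le : 2 ≤ Nat.card t
  cubic : ∀ v : t, (tree.neighborSet v).ncard = 1 ∨ (tree.neighborSet v).ncard = 3
  leafEquiv : V ≃ {v : t // (tree.neighborSet v).ncard = 1}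

/-- The set of vertices of `G` whose leaf lies on the side of `a` of
the edge `ab` of the decomposition tree. -/
def RankDecomp.side {V : Type} [Fintype V] {G : SimpleGraph V}
    (D : RankDecomp G) (a b : D.t) : Set V :=
  {x | (D.tree.deleteEdges {s(a, b)}).Reachable (D.leafEquiv x).1 a}

/-- The cutrank function of `G`: the GF(2)-rank of the adjacency submatrix
between `X` and its complement. -/
noncomputable def cutRank {V : Type} [Fintype V] (G : SimpleGraph V) (X : Set V) : ℕ :=
  haveI : Fintype ↥X := Fintype.ofFinite _
  haveI : Fintype ↥(Xᶜ) := Fintype.ofFinite _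
  haveI : DecidableRel G.Adj := Classical.decRel _
  Matrix.rank (Matrix.of (fun (x : ↥X) (y : ↥(Xᶜ)) =>
    if G.Adj x.1 y.1 then (1 : ZMod 2) else 0))

/-- The decomposition `D` has width at most `k`. -/
def RankDecomp.WidthLE {V : Type} [Fintype V] {G : SimpleGraph V}
    (D : RankDecomp G) (k : ℕ) : Prop :=
  ∀ a b : D.t, D.tree.Adj a b → cutRank G (D.side a b) ≤ k

/-- The rank-width of `G`. -/
noncomputable def rankwidth {V : Type} [Fintype V] (G : SimpleGraph V) : ℕ :=
  sInf {k | ∃ D : RankDecomp G, D.WidthLE k}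

/-- `l` is an induced path in `G`: its vertices are distinct and two of them
are adjacent in `G` iff they are consecutive on `l`. -/
def IsInducedPathList {V : Type} (G : SimpleGraph V) (l : List V) : Prop :=
  l.Nodup ∧ ∀ x ∈ l, ∀ y ∈ l, (G.Adj x y ↔ ChainAdj l x y)

/-- The diamond: the complete graph on four vertices minus an edge. -/
def diamond : SimpleGraph (Fin 4) := (⊤ : SimpleGraph (Fin 4)).deleteEdges {s(2, 3)}

lemma lexLt_cons_cons {i j : ℕ} {x y : List ℕ} :
    lexLt (i::x) (j::y) ↔ i < j ∨ (i = j ∧ lexLt x y) := by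
  constructor
  · intro h
    cases h with
    | cons h => exact Or.inr ⟨rfl, h⟩
    | rel h => exact Or.inl h
  · rintro (h | ⟨rfl, h⟩)
    · exact List.Lex.rel h
    · exact List.Lex.cons h

lemma not_lexLt_nil (x : List ℕ) : ¬ lexLt x [] := by
  intro h; cases h

lemma lexLt_nil_iff {y : List ℕ} : lexLt [] y ↔ y ≠ [] := by
  cases y with
  | nil => simp [not_lexLt_nil]
  | cons a l => refine ⟨fun _ => by simp, fun _ => List.Lex.nil⟩

lemma lexLt_irrefl (x : List ℕ) : ¬ lexLt x x := by
  induction x with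
  | nil => exact not_lexLt_nil []
  | cons a l ih =>
    rw [lexLt_cons_cons]
    rintro (h | ⟨_, h⟩)
    · omega
    · exact ih h

lemma mem_tl_succ {k : ℕ} {x : List ℕ} : x ∈ Tl (k+1) ↔
    x = [1] ∨ (∃ y ∈ Tl k, x = 1::y) ∨ x = [2] ∨ x = [3] ∨ (∃ y ∈ Tl k, x = 3::y) ∨ x = [4] := by
  simp only [Tl, List.mem_append, List.mem_map, List.mem_cons, List.mem_singleton,
    List.not_mem_nil, or_false]
  constructor
  · rintro ((((h | ⟨y,hy,h⟩) | h | h) | ⟨y,hy,h⟩) | h)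
    · tauto
    · exact Or.inr (Or.inl ⟨y, hy, h.symm⟩)
    · tauto
    · tauto
    · exact Or.inr (Or.inr (Or.inr (Or.inr (Or.inl ⟨y, hy, h.symm⟩))))
    · tauto
  · rintro (h | ⟨y,hy,h⟩ | h | h | ⟨y,hy,h⟩ | h)
    · tauto
    · exact Or.inl (Or.inl (Or.inl (Or.inr ⟨y, hy, h.symm⟩)))
    · tauto
    · tauto
    · exact Or.inl (Or.inr ⟨y, hy, h.symm⟩)
    · tauto

lemma tl_ne_nil : ∀ {d : ℕ} {x : List ℕ}, x ∈ Tl d → x ≠ [] := by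
  intro d
  induction d with
  | zero => intro x hx; simp [Tl] at hx
  | succ k ih =>
    intro x hx
    rcases mem_tl_succ.1 hx with h | ⟨y,hy,h⟩ | h | h | ⟨y,hy,h⟩ | h <;> subst h <;> simp

lemma not_lexLt_one {d : ℕ} {z : List ℕ} (hz : z ∈ Tl d) : ¬ lexLt z [1] := by
  cases d with
  | zero => simp [Tl] at hz
  | succ k =>
    rcases mem_tl_succ.1 hz with rfl | ⟨y,hy,rfl⟩ | rfl | rfl | ⟨y,hy,rfl⟩ | rfl <;>
      simp [lexLt_cons_cons, not_lexLt_nil]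

lemma not_lexLt_four {d : ℕ} {z : List ℕ} (hz : z ∈ Tl d) : ¬ lexLt [4] z := by
  cases d with
  | zero => simp [Tl] at hz
  | succ k =>
    rcases mem_tl_succ.1 hz with rfl | ⟨y,hy,rfl⟩ | rfl | rfl | ⟨y,hy,rfl⟩ | rfl <;>
      simp [lexLt_cons_cons, not_lexLt_nil]

lemma lt_oneblock {k : ℕ} {z y : List ℕ} (hz : z ∈ Tl (k+1)) (h : lexLt z (1::y)) :
    z = [1] ∨ ∃ w ∈ Tl k, z = 1::w ∧ lexLt w y := by
  rcases mem_tl_succ.1 hz with rfl | ⟨w,hw,rfl⟩ | rfl | rfl | ⟨w,hw,rfl⟩ | rfl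
  · exact Or.inl rfl
  · simp only [lexLt_cons_cons] at h
    rcases h with h | ⟨-, h⟩
    · omega
    · exact Or.inr ⟨w, hw, rfl, h⟩
  all_goals simp [lexLt_cons_cons, not_lexLt_nil] at h

lemma gt_threeblock {k : ℕ} {z y : List ℕ} (hz : z ∈ Tl (k+1)) (h : lexLt (3::y) z) :
    z = [4] ∨ ∃ w ∈ Tl k, z = 3::w ∧ lexLt y w := by
  rcases mem_tl_succ.1 hz with rfl | ⟨w,hw,rfl⟩ | rfl | rfl | ⟨w,hw,rfl⟩ | rfl
  · simp [lexLt_cons_cons, not_lexLt_nil] at h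
  · simp [lexLt_cons_cons, not_lexLt_nil] at h
  · simp [lexLt_cons_cons, not_lexLt_nil] at h
  · simp [lexLt_cons_cons, not_lexLt_nil] at h
  · simp only [lexLt_cons_cons] at h
    rcases h with h | ⟨-, h⟩
    · omega
    · exact Or.inr ⟨w, hw, rfl, h⟩
  · exact Or.inl rfl

lemma gt_two {k : ℕ} {z : List ℕ} (hz : z ∈ Tl (k+1)) (h : lexLt [2] z) :
    z = [3] ∨ (∃ w ∈ Tl k, z = 3::w) ∨ z = [4] := by
  rcases mem_tl_succ.1 hz with rfl | ⟨w,hw,rfl⟩ | rfl | rfl | ⟨w,hw,rfl⟩ | rfl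
  · simp [lexLt_cons_cons, not_lexLt_nil] at h
  · simp [lexLt_cons_cons, not_lexLt_nil] at h
  · simp [lexLt_cons_cons, not_lexLt_nil] at h
  · exact Or.inl rfl
  · exact Or.inr (Or.inl ⟨w, hw, rfl⟩)
  · exact Or.inr (Or.inr rfl)

lemma gt_three {k : ℕ} {z : List ℕ} (hz : z ∈ Tl (k+1)) (h : lexLt [3] z) :
    (∃ w ∈ Tl k, z = 3::w) ∨ z = [4] := by
  rcases mem_tl_succ.1 hz with rfl | ⟨w,hw,rfl⟩ | rfl | rfl | ⟨w,hw,rfl⟩ | rfl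
  · simp [lexLt_cons_cons, not_lexLt_nil] at h
  · simp [lexLt_cons_cons, not_lexLt_nil] at h
  · simp [lexLt_cons_cons, not_lexLt_nil] at h
  · simp [lexLt_cons_cons, not_lexLt_nil] at h
  · exact Or.inl ⟨w, hw, rfl⟩
  · exact Or.inr rfl

lemma lt_two {k : ℕ} {z : List ℕ} (hz : z ∈ Tl (k+1)) (h : lexLt z [2]) :
    z = [1] ∨ ∃ w ∈ Tl k, z = 1::w := by
  rcases mem_tl_succ.1 hz with rfl | ⟨w,hw,rfl⟩ | rfl | rfl | ⟨w,hw,rfl⟩ | rfl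
  · exact Or.inl rfl
  · exact Or.inr ⟨w, hw, rfl⟩
  · simp [lexLt_cons_cons, not_lexLt_nil] at h
  · simp [lexLt_cons_cons, not_lexLt_nil] at h
  · simp [lexLt_cons_cons, not_lexLt_nil] at h
  · simp [lexLt_cons_cons, not_lexLt_nil] at h

lemma lt_three {k : ℕ} {z : List ℕ} (hz : z ∈ Tl (k+1)) (h : lexLt z [3]) :
    z = [1] ∨ (∃ w ∈ Tl k, z = 1::w) ∨ z = [2] := by
  rcases mem_tl_succ.1 hz with rfl | ⟨w,hw,rfl⟩ | rfl | rfl | ⟨w,hw,rfl⟩ | rfl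
  · exact Or.inl rfl
  · exact Or.inr (Or.inl ⟨w, hw, rfl⟩)
  · exact Or.inr (Or.inr rfl)
  · simp [lexLt_cons_cons, not_lexLt_nil] at h
  · simp [lexLt_cons_cons, not_lexLt_nil] at h
  · simp [lexLt_cons_cons, not_lexLt_nil] at h

/-- If there is an equal-length pair `c ≺ v` before `b`, then some element of
length `b.length` precedes `b`. -/
lemma lemP : ∀ (k : ℕ) (b c v : List ℕ), b ∈ Tl k → c ∈ Tl k → v ∈ Tl k →
    lexLt c v → lexLt v b → c.length = v.length →
    ∃ e ∈ Tl k, lexLt e b ∧ e.length = b.length := by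
  intro k
  induction k with
  | zero => intro b c v hb; simp [Tl] at hb
  | succ k ih =>
    intro b c v hb hc hv hcv hvb hlen
    rcases mem_tl_succ.1 hb with rfl | ⟨xb, hxb, rfl⟩ | rfl | rfl | ⟨xb, hxb, rfl⟩ | rfl
    · exact absurd hvb (not_lexLt_one hv)
    · -- b = 1 :: xb
      rcases lt_oneblock hv hvb with rfl | ⟨xv, hxv, rfl, hxvb⟩
      · exact absurd hcv (not_lexLt_one hc)
      rcases lt_oneblock hc hcv with rfl | ⟨xc, hxc, rfl, hxcv⟩
      · exfalso
        cases xv with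
        | nil => exact tl_ne_nil hxv rfl
        | cons h t => simp at hlen
      · obtain ⟨e', he', helt, helen⟩ := ih xb xc xv hxb hxc hxv hxcv hxvb
          (by simpa using hlen)
        exact ⟨1::e', mem_tl_succ.2 (Or.inr (Or.inl ⟨e', he', rfl⟩)),
          lexLt_cons_cons.2 (Or.inr ⟨rfl, helt⟩), by simp [helen]⟩
    · exact ⟨[1], mem_tl_succ.2 (Or.inl rfl), lexLt_cons_cons.2 (Or.inl one_lt_two), rfl⟩
    · exact ⟨[2], mem_tl_succ.2 (by tauto), lexLt_cons_cons.2 (Or.inl (by omega)), rfl⟩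
    · -- b = 3 :: xb
      exact ⟨1::xb, mem_tl_succ.2 (Or.inr (Or.inl ⟨xb, hxb, rfl⟩)),
        lexLt_cons_cons.2 (Or.inl (by omega)), by simp⟩
    · exact ⟨[3], mem_tl_succ.2 (by tauto), lexLt_cons_cons.2 (Or.inl (by omega)), rfl⟩

/-- If there is an equal-length pair `c ≺ v` after `a`, then some element of
length `a.length` follows `a`. -/
lemma lemQ : ∀ (k : ℕ) (a c v : List ℕ), a ∈ Tl k → c ∈ Tl k → v ∈ Tl k →
    lexLt a c → lexLt c v → c.length = v.length →
    ∃ e ∈ Tl k, lexLt a e ∧ e.length = a.length := by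
  intro k
  induction k with
  | zero => intro a c v ha; simp [Tl] at ha
  | succ k ih =>
    intro a c v ha hc hv hac hcv hlen
    rcases mem_tl_succ.1 ha with rfl | ⟨xa, hxa, rfl⟩ | rfl | rfl | ⟨xa, hxa, rfl⟩ | rfl
    · exact ⟨[2], mem_tl_succ.2 (by tauto), lexLt_cons_cons.2 (Or.inl one_lt_two), rfl⟩
    · -- a = 1 :: xa
      exact ⟨3::xa, mem_tl_succ.2 (Or.inr (Or.inr (Or.inr (Or.inr (Or.inl ⟨xa, hxa, rfl⟩))))),
        lexLt_cons_cons.2 (Or.inl (by omega)), by simp⟩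
    · exact ⟨[3], mem_tl_succ.2 (by tauto), lexLt_cons_cons.2 (Or.inl (by omega)), rfl⟩
    · exact ⟨[4], mem_tl_succ.2 (by tauto), lexLt_cons_cons.2 (Or.inl (by omega)), rfl⟩
    · -- a = 3 :: xa
      rcases gt_threeblock hc hac with rfl | ⟨xc, hxc, rfl, hxac⟩
      · exact absurd hcv (not_lexLt_four hv)
      rcases gt_threeblock hv hcv with rfl | ⟨xv, hxv, rfl, hxcv⟩
      · exfalso
        cases xc with
        | nil => exact tl_ne_nil hxc rfl
        | cons h t => simp at hlen
      · obtain ⟨e', he', helt, helen⟩ := ih xa xc xv hxa hxc hxv hxac hxcv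
          (by simpa using hlen)
        exact ⟨3::e', mem_tl_succ.2 (Or.inr (Or.inr (Or.inr (Or.inr (Or.inl ⟨e', he', rfl⟩))))),
          lexLt_cons_cons.2 (Or.inr ⟨rfl, helt⟩), by simp [helen]⟩
    · exact absurd hac (not_lexLt_four hc)

/-- For `x, y` of different lengths, either some element after `x` has one of
the two lengths, or some element before `y` does. -/
lemma lemN : ∀ (k : ℕ) (x y : List ℕ), x ∈ Tl k → y ∈ Tl k → x.length ≠ y.length →
    (∃ x' ∈ Tl k, lexLt x x' ∧ (x'.length = x.length ∨ x'.length = y.length)) ∨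
    (∃ y' ∈ Tl k, lexLt y' y ∧ (y'.length = x.length ∨ y'.length = y.length)) := by
  intro k
  induction k with
  | zero => intro x y hx; simp [Tl] at hx
  | succ k ih =>
    intro x y hx hy hxy
    rcases mem_tl_succ.1 hx with rfl | ⟨u, hu, rfl⟩ | rfl | rfl | ⟨u, hu, rfl⟩ | rfl
    · exact Or.inl ⟨[2], mem_tl_succ.2 (by tauto),
        lexLt_cons_cons.2 (Or.inl one_lt_two), Or.inl rfl⟩
    · -- x = 1 :: u
      rcases mem_tl_succ.1 hy with rfl | ⟨w, hw, rfl⟩ | rfl | rfl | ⟨w, hw, rfl⟩ | rfl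
      · exact Or.inl ⟨[2], mem_tl_succ.2 (by tauto),
          lexLt_cons_cons.2 (Or.inl (by omega)), Or.inr rfl⟩
      · rcases ih u w hu hw (by simpa using hxy) with ⟨u', hu', hlt, hl⟩ | ⟨w', hw', hlt, hl⟩
        · exact Or.inl ⟨1::u', mem_tl_succ.2 (Or.inr (Or.inl ⟨u', hu', rfl⟩)),
            lexLt_cons_cons.2 (Or.inr ⟨rfl, hlt⟩), by simpa using hl⟩
        · exact Or.inr ⟨1::w', mem_tl_succ.2 (Or.inr (Or.inl ⟨w', hw', rfl⟩)),
            lexLt_cons_cons.2 (Or.inr ⟨rfl, hlt⟩), by simpa using hl⟩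
      · exact Or.inl ⟨[2], mem_tl_succ.2 (by tauto),
          lexLt_cons_cons.2 (Or.inl (by omega)), Or.inr rfl⟩
      · exact Or.inl ⟨[2], mem_tl_succ.2 (by tauto),
          lexLt_cons_cons.2 (Or.inl (by omega)), Or.inr (by simp)⟩
      · rcases ih u w hu hw (by simpa using hxy) with ⟨u', hu', hlt, hl⟩ | ⟨w', hw', hlt, hl⟩
        · exact Or.inl ⟨1::u', mem_tl_succ.2 (Or.inr (Or.inl ⟨u', hu', rfl⟩)),
            lexLt_cons_cons.2 (Or.inr ⟨rfl, hlt⟩), by simpa using hl⟩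
        · exact Or.inr ⟨3::w', mem_tl_succ.2 (Or.inr (Or.inr (Or.inr (Or.inr (Or.inl ⟨w', hw', rfl⟩))))),
            lexLt_cons_cons.2 (Or.inr ⟨rfl, hlt⟩), by simpa using hl⟩
      · exact Or.inl ⟨[2], mem_tl_succ.2 (by tauto),
          lexLt_cons_cons.2 (Or.inl (by omega)), Or.inr rfl⟩
    · exact Or.inl ⟨[3], mem_tl_succ.2 (by tauto),
        lexLt_cons_cons.2 (Or.inl (by omega)), Or.inl rfl⟩
    · exact Or.inl ⟨[4], mem_tl_succ.2 (by tauto),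
        lexLt_cons_cons.2 (Or.inl (by omega)), Or.inl rfl⟩
    · -- x = 3 :: u
      rcases mem_tl_succ.1 hy with rfl | ⟨w, hw, rfl⟩ | rfl | rfl | ⟨w, hw, rfl⟩ | rfl
      · exact Or.inl ⟨[4], mem_tl_succ.2 (by tauto),
          lexLt_cons_cons.2 (Or.inl (by omega)), Or.inr rfl⟩
      · rcases ih u w hu hw (by simpa using hxy) with ⟨u', hu', hlt, hl⟩ | ⟨w', hw', hlt, hl⟩
        · exact Or.inl ⟨3::u', mem_tl_succ.2 (Or.inr (Or.inr (Or.inr (Or.inr (Or.inl ⟨u', hu', rfl⟩))))),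
            lexLt_cons_cons.2 (Or.inr ⟨rfl, hlt⟩), by simpa using hl⟩
        · exact Or.inr ⟨1::w', mem_tl_succ.2 (Or.inr (Or.inl ⟨w', hw', rfl⟩)),
            lexLt_cons_cons.2 (Or.inr ⟨rfl, hlt⟩), by simpa using hl⟩
      · exact Or.inl ⟨[4], mem_tl_succ.2 (by tauto),
          lexLt_cons_cons.2 (Or.inl (by omega)), Or.inr rfl⟩
      · exact Or.inl ⟨[4], mem_tl_succ.2 (by tauto),
          lexLt_cons_cons.2 (Or.inl (by omega)), Or.inr (by simp)⟩
      · rcases ih u w hu hw (by simpa using hxy) with ⟨u', hu', hlt, hl⟩ | ⟨w', hw', hlt, hl⟩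
        · exact Or.inl ⟨3::u', mem_tl_succ.2 (Or.inr (Or.inr (Or.inr (Or.inr (Or.inl ⟨u', hu', rfl⟩))))),
            lexLt_cons_cons.2 (Or.inr ⟨rfl, hlt⟩), by simpa using hl⟩
        · exact Or.inr ⟨3::w', mem_tl_succ.2 (Or.inr (Or.inr (Or.inr (Or.inr (Or.inl ⟨w', hw', rfl⟩))))),
            lexLt_cons_cons.2 (Or.inr ⟨rfl, hlt⟩), by simpa using hl⟩
      · exact Or.inl ⟨[4], mem_tl_succ.2 (by tauto),
          lexLt_cons_cons.2 (Or.inl (by omega)), Or.inr rfl⟩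
    · -- x = [4]
      rcases mem_tl_succ.1 hy with rfl | ⟨w, hw, rfl⟩ | rfl | rfl | ⟨w, hw, rfl⟩ | rfl
      · simp at hxy
      · refine Or.inr ⟨[1], mem_tl_succ.2 (by tauto), ?_, Or.inl rfl⟩
        refine lexLt_cons_cons.2 (Or.inr ⟨rfl, ?_⟩)
        exact lexLt_nil_iff.2 (tl_ne_nil hw)
      · simp at hxy
      · simp at hxy
      · exact Or.inr ⟨[1], mem_tl_succ.2 (by tauto),
          lexLt_cons_cons.2 (Or.inl (by omega)), Or.inl rfl⟩
      · simp at hxy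

/-- Main combinatorial lemma: if `a ≺ c ≺ v ≺ b` with `l(c) = l(v)` and
`l(a) ≠ l(b)`, then some element strictly between `a` and `b` has length
`l(a)` or `l(b)`. -/
lemma lemG : ∀ (k : ℕ) (a b c v : List ℕ), a ∈ Tl k → b ∈ Tl k → c ∈ Tl k → v ∈ Tl k →
    lexLt a c → lexLt c v → lexLt v b → c.length = v.length → a.length ≠ b.length →
    ∃ e ∈ Tl k, lexLt a e ∧ lexLt e b ∧ (e.length = a.length ∨ e.length = b.length) := by
  intro k
  induction k with
  | zero => intro a b c v ha; simp [Tl] at ha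
  | succ k ih =>
    intro a b c v ha hb hc hv hac hcv hvb hclen hab
    rcases mem_tl_succ.1 ha with rfl | ⟨xa, hxa, rfl⟩ | rfl | rfl | ⟨xa, hxa, rfl⟩ | rfl
    · -- a = [1]
      rcases mem_tl_succ.1 hb with rfl | ⟨xb, hxb, rfl⟩ | rfl | rfl | ⟨xb, hxb, rfl⟩ | rfl
      · simp at hab
      · -- b = 1 :: xb
        rcases lt_oneblock hv hvb with rfl | ⟨xv, hxv, rfl, hxvb⟩
        · exact absurd hcv (not_lexLt_one hc)
        rcases lt_oneblock hc hcv with rfl | ⟨xc, hxc, rfl, hxcv⟩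
        · exact absurd hac (lexLt_irrefl [1])
        obtain ⟨e', he', helt, helen⟩ := lemP k xb xc xv hxb hxc hxv hxcv hxvb
          (by simpa using hclen)
        refine ⟨1::e', mem_tl_succ.2 (Or.inr (Or.inl ⟨e', he', rfl⟩)), ?_,
          lexLt_cons_cons.2 (Or.inr ⟨rfl, helt⟩), Or.inr (by simp [helen])⟩
        exact lexLt_cons_cons.2 (Or.inr ⟨rfl, lexLt_nil_iff.2 (tl_ne_nil he')⟩)
      · simp at hab
      · simp at hab
      · -- b = 3 :: xb
        exact ⟨[2], mem_tl_succ.2 (by tauto), lexLt_cons_cons.2 (Or.inl one_lt_two),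
          lexLt_cons_cons.2 (Or.inl (by omega)), Or.inl rfl⟩
      · simp at hab
    · -- a = 1 :: xa
      rcases mem_tl_succ.1 hb with rfl | ⟨xb, hxb, rfl⟩ | rfl | rfl | ⟨xb, hxb, rfl⟩ | rfl
      · exact absurd hvb (not_lexLt_one hv)
      · -- b = 1 :: xb
        rcases lt_oneblock hv hvb with rfl | ⟨xv, hxv, rfl, hxvb⟩
        · exact absurd hcv (not_lexLt_one hc)
        rcases lt_oneblock hc hcv with rfl | ⟨xc, hxc, rfl, hxcv⟩
        · exact absurd hac (by simp [lexLt_cons_cons, not_lexLt_nil])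
        have hxac : lexLt xa xc := by
          rcases lexLt_cons_cons.1 hac with h | ⟨-, h⟩
          · omega
          · exact h
        obtain ⟨e', he', h1, h2, h3⟩ := ih xa xb xc xv hxa hxb hxc hxv hxac hxcv hxvb
          (by simpa using hclen) (by simpa using hab)
        exact ⟨1::e', mem_tl_succ.2 (Or.inr (Or.inl ⟨e', he', rfl⟩)),
          lexLt_cons_cons.2 (Or.inr ⟨rfl, h1⟩), lexLt_cons_cons.2 (Or.inr ⟨rfl, h2⟩),
          by simpa using h3⟩
      · -- b = [2]
        rcases lt_two hv hvb with rfl | ⟨xv, hxv, rfl⟩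
        · exact absurd hcv (not_lexLt_one hc)
        rcases lt_oneblock hc hcv with rfl | ⟨xc, hxc, rfl, hxcv⟩
        · exact absurd hac (by simp [lexLt_cons_cons, not_lexLt_nil])
        have hxac : lexLt xa xc := by
          rcases lexLt_cons_cons.1 hac with h | ⟨-, h⟩
          · omega
          · exact h
        obtain ⟨e', he', hlt, hlen⟩ := lemQ k xa xc xv hxa hxc hxv hxac hxcv
          (by simpa using hclen)
        exact ⟨1::e', mem_tl_succ.2 (Or.inr (Or.inl ⟨e', he', rfl⟩)),
          lexLt_cons_cons.2 (Or.inr ⟨rfl, hlt⟩),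
          lexLt_cons_cons.2 (Or.inl one_lt_two), Or.inl (by simp [hlen])⟩
      · -- b = [3]
        rcases lt_three hv hvb with rfl | ⟨xv, hxv, rfl⟩ | rfl
        · exact absurd hcv (not_lexLt_one hc)
        · rcases lt_oneblock hc hcv with rfl | ⟨xc, hxc, rfl, hxcv⟩
          · exact absurd hac (by simp [lexLt_cons_cons, not_lexLt_nil])
          have hxac : lexLt xa xc := by
            rcases lexLt_cons_cons.1 hac with h | ⟨-, h⟩
            · omega
            · exact h
          obtain ⟨e', he', hlt, hlen⟩ := lemQ k xa xc xv hxa hxc hxv hxac hxcv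
            (by simpa using hclen)
          exact ⟨1::e', mem_tl_succ.2 (Or.inr (Or.inl ⟨e', he', rfl⟩)),
            lexLt_cons_cons.2 (Or.inr ⟨rfl, hlt⟩),
            lexLt_cons_cons.2 (Or.inl (by omega)), Or.inl (by simp [hlen])⟩
        · -- v = [2]
          rcases lt_two hc hcv with rfl | ⟨xc, hxc, rfl⟩
          · exact absurd hac (by simp [lexLt_cons_cons, not_lexLt_nil])
          · exfalso
            cases xc with
            | nil => exact tl_ne_nil hxc rfl
            | cons h t => simp at hclen
      · -- b = 3 :: xb : use lemN
        rcases lemN k xa xb hxa hxb (by simpa using hab) with ⟨x', hx', hlt, hl⟩ | ⟨y', hy', hlt, hl⟩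
        · exact ⟨1::x', mem_tl_succ.2 (Or.inr (Or.inl ⟨x', hx', rfl⟩)),
            lexLt_cons_cons.2 (Or.inr ⟨rfl, hlt⟩),
            lexLt_cons_cons.2 (Or.inl (by omega)), by simpa using hl⟩
        · exact ⟨3::y', mem_tl_succ.2 (Or.inr (Or.inr (Or.inr (Or.inr (Or.inl ⟨y', hy', rfl⟩))))),
            lexLt_cons_cons.2 (Or.inl (by omega)),
            lexLt_cons_cons.2 (Or.inr ⟨rfl, hlt⟩), by simpa using hl⟩
      · -- b = [4]
        exact ⟨[2], mem_tl_succ.2 (by tauto), lexLt_cons_cons.2 (Or.inl (by omega)),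
          lexLt_cons_cons.2 (Or.inl (by omega)), Or.inr rfl⟩
    · -- a = [2]
      rcases mem_tl_succ.1 hb with rfl | ⟨xb, hxb, rfl⟩ | rfl | rfl | ⟨xb, hxb, rfl⟩ | rfl
      · exact absurd hvb (not_lexLt_one hv)
      · -- b = 1 :: xb : contradiction
        exfalso
        rcases gt_two hc hac with rfl | ⟨xc, hxc, rfl⟩ | rfl
        · rcases gt_three hv hcv with ⟨xv, hxv, rfl⟩ | rfl
          · exact absurd hvb (by simp [lexLt_cons_cons, not_lexLt_nil])
          · exact absurd hvb (by simp [lexLt_cons_cons, not_lexLt_nil])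
        · rcases gt_threeblock hv hcv with rfl | ⟨xv, hxv, rfl, -⟩
          · exact absurd hvb (by simp [lexLt_cons_cons, not_lexLt_nil])
          · exact absurd hvb (by simp [lexLt_cons_cons, not_lexLt_nil])
        · exact absurd hcv (not_lexLt_four hv)
      · simp at hab
      · simp at hab
      · -- b = 3 :: xb
        rcases gt_two hc hac with rfl | ⟨xc, hxc, rfl⟩ | rfl
        · -- c = [3]
          exfalso
          rcases gt_three hv hcv with ⟨xv, hxv, rfl⟩ | rfl
          · cases xv with
            | nil => exact tl_ne_nil hxv rfl
            | cons h t => simp at hclen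
          · exact absurd hvb (by simp [lexLt_cons_cons, not_lexLt_nil])
        · -- c = 3 :: xc
          rcases gt_threeblock hv hcv with rfl | ⟨xv, hxv, rfl, hxcv⟩
          · exact absurd hvb (by simp [lexLt_cons_cons, not_lexLt_nil])
          have hxvb : lexLt xv xb := by
            rcases lexLt_cons_cons.1 hvb with h | ⟨-, h⟩
            · omega
            · exact h
          obtain ⟨e', he', helt, helen⟩ := lemP k xb xc xv hxb hxc hxv hxcv hxvb
            (by simpa using hclen)
          exact ⟨3::e', mem_tl_succ.2 (Or.inr (Or.inr (Or.inr (Or.inr (Or.inl ⟨e', he', rfl⟩))))),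
            lexLt_cons_cons.2 (Or.inl (by omega)),
            lexLt_cons_cons.2 (Or.inr ⟨rfl, helt⟩), Or.inr (by simp [helen])⟩
        · exact absurd hcv (not_lexLt_four hv)
      · simp at hab
    · -- a = [3]
      rcases mem_tl_succ.1 hb with rfl | ⟨xb, hxb, rfl⟩ | rfl | rfl | ⟨xb, hxb, rfl⟩ | rfl
      · exact absurd hvb (not_lexLt_one hv)
      · -- b = 1 :: xb : contradiction
        exfalso
        rcases gt_three hc hac with ⟨xc, hxc, rfl⟩ | rfl
        · rcases gt_threeblock hv hcv with rfl | ⟨xv, hxv, rfl, -⟩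
          · exact absurd hvb (by simp [lexLt_cons_cons, not_lexLt_nil])
          · exact absurd hvb (by simp [lexLt_cons_cons, not_lexLt_nil])
        · exact absurd hcv (not_lexLt_four hv)
      · -- b = [2] : contradiction
        exfalso
        rcases gt_three hc hac with ⟨xc, hxc, rfl⟩ | rfl
        · rcases gt_threeblock hv hcv with rfl | ⟨xv, hxv, rfl, -⟩
          · exact absurd hvb (by simp [lexLt_cons_cons, not_lexLt_nil])
          · exact absurd hvb (by simp [lexLt_cons_cons, not_lexLt_nil])
        · exact absurd hcv (not_lexLt_four hv)
      · simp at hab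
      · -- b = 3 :: xb
        rcases gt_three hc hac with ⟨xc, hxc, rfl⟩ | rfl
        · rcases gt_threeblock hv hcv with rfl | ⟨xv, hxv, rfl, hxcv⟩
          · exact absurd hvb (by simp [lexLt_cons_cons, not_lexLt_nil])
          have hxvb : lexLt xv xb := by
            rcases lexLt_cons_cons.1 hvb with h | ⟨-, h⟩
            · omega
            · exact h
          obtain ⟨e', he', helt, helen⟩ := lemP k xb xc xv hxb hxc hxv hxcv hxvb
            (by simpa using hclen)
          refine ⟨3::e', mem_tl_succ.2 (Or.inr (Or.inr (Or.inr (Or.inr (Or.inl ⟨e', he', rfl⟩))))), ?_,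
            lexLt_cons_cons.2 (Or.inr ⟨rfl, helt⟩), Or.inr (by simp [helen])⟩
          exact lexLt_cons_cons.2 (Or.inr ⟨rfl, lexLt_nil_iff.2 (tl_ne_nil he')⟩)
        · exact absurd hcv (not_lexLt_four hv)
      · simp at hab
    · -- a = 3 :: xa
      rcases mem_tl_succ.1 hb with rfl | ⟨xb, hxb, rfl⟩ | rfl | rfl | ⟨xb, hxb, rfl⟩ | rfl
      · exact absurd hvb (not_lexLt_one hv)
      · -- b = 1 :: xb : contradiction
        exfalso
        rcases gt_threeblock hc hac with rfl | ⟨xc, hxc, rfl, -⟩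
        · exact absurd hcv (not_lexLt_four hv)
        · rcases gt_threeblock hv hcv with rfl | ⟨xv, hxv, rfl, -⟩
          · exact absurd hvb (by simp [lexLt_cons_cons, not_lexLt_nil])
          · exact absurd hvb (by simp [lexLt_cons_cons, not_lexLt_nil])
      · -- b = [2] : contradiction
        exfalso
        rcases gt_threeblock hc hac with rfl | ⟨xc, hxc, rfl, -⟩
        · exact absurd hcv (not_lexLt_four hv)
        · rcases gt_threeblock hv hcv with rfl | ⟨xv, hxv, rfl, -⟩
          · exact absurd hvb (by simp [lexLt_cons_cons, not_lexLt_nil])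
          · exact absurd hvb (by simp [lexLt_cons_cons, not_lexLt_nil])
      · -- b = [3] : contradiction
        exfalso
        rcases gt_threeblock hc hac with rfl | ⟨xc, hxc, rfl, -⟩
        · exact absurd hcv (not_lexLt_four hv)
        · rcases gt_threeblock hv hcv with rfl | ⟨xv, hxv, rfl, -⟩
          · exact absurd hvb (by simp [lexLt_cons_cons, not_lexLt_nil])
          · exact absurd hvb (by simp [lexLt_cons_cons, not_lexLt_nil])
      · -- b = 3 :: xb
        rcases gt_threeblock hc hac with rfl | ⟨xc, hxc, rfl, hxac⟩
        · exact absurd hcv (not_lexLt_four hv)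
        rcases gt_threeblock hv hcv with rfl | ⟨xv, hxv, rfl, hxcv⟩
        · exact absurd hvb (by simp [lexLt_cons_cons, not_lexLt_nil])
        have hxvb : lexLt xv xb := by
          rcases lexLt_cons_cons.1 hvb with h | ⟨-, h⟩
          · omega
          · exact h
        obtain ⟨e', he', h1, h2, h3⟩ := ih xa xb xc xv hxa hxb hxc hxv hxac hxcv hxvb
          (by simpa using hclen) (by simpa using hab)
        exact ⟨3::e', mem_tl_succ.2 (Or.inr (Or.inr (Or.inr (Or.inr (Or.inl ⟨e', he', rfl⟩))))),
          lexLt_cons_cons.2 (Or.inr ⟨rfl, h1⟩), lexLt_cons_cons.2 (Or.inr ⟨rfl, h2⟩),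
          by simpa using h3⟩
      · -- b = [4]
        rcases gt_threeblock hc hac with rfl | ⟨xc, hxc, rfl, hxac⟩
        · exact absurd hcv (not_lexLt_four hv)
        rcases gt_threeblock hv hcv with rfl | ⟨xv, hxv, rfl, hxcv⟩
        · exact absurd hvb (lexLt_irrefl [4])
        obtain ⟨e', he', hlt, hlen⟩ := lemQ k xa xc xv hxa hxc hxv hxac hxcv
          (by simpa using hclen)
        exact ⟨3::e', mem_tl_succ.2 (Or.inr (Or.inr (Or.inr (Or.inr (Or.inl ⟨e', he', rfl⟩))))),
          lexLt_cons_cons.2 (Or.inr ⟨rfl, hlt⟩),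
          lexLt_cons_cons.2 (Or.inl (by omega)), Or.inl (by simp [hlen])⟩
    · -- a = [4]
      exact absurd hac (not_lexLt_four hc)

/-- A proper interval `[a,b]` with `l(a) ≠ l(b)` contains no flat step. -/
theorem stmt7 (d : ℕ) (a b : List ℕ)
    (hp : ProperInterval d a b) (hl : a.length ≠ b.length) :
    ∀ c, c ∈ Tl d → lexLe a c → lexLt c b →
      ∀ v, IsSucc d c v → v.length ≠ c.length := by
  intro c hc hac hcb v hsv hvl
  obtain ⟨hv, hcv, hmin⟩ := hsv
  obtain ⟨ha, hb, hab, hprop⟩ := hp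
  have hvb : v = b ∨ lexLt v b := hmin b hb hcb
  have hac' : a = c ∨ lexLt a c := hac
  rcases hac' with rfl | hac'
  · rcases hvb with rfl | hvb'
    · exact hl hvl.symm
    · have hne1 : v ≠ a := fun h => lexLt_irrefl a (h ▸ hcv)
      have hne2 : v ≠ b := fun h => lexLt_irrefl v (h ▸ hvb')
      have hpe := hprop v ⟨hv, Or.inr hcv, Or.inr hvb'⟩ hne1 hne2
      exact hpe.1 hvl
  · rcases hvb with heq | hvb'
    · have hne1 : c ≠ a := fun h => lexLt_irrefl a (h ▸ hac')
      have hne2 : c ≠ b := fun h => lexLt_irrefl b (h ▸ hcb)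
      have hpe := hprop c ⟨hc, Or.inr hac', Or.inr hcb⟩ hne1 hne2
      exact hpe.2 ((heq ▸ hvl).symm)
    · obtain ⟨e, he, h1, h2, h3⟩ := lemG d a b c v ha hb hc hv hac' hcv hvb' hvl.symm hl
      have hne1 : e ≠ a := fun h => lexLt_irrefl a (h ▸ h1)
      have hne2 : e ≠ b := fun h => lexLt_irrefl e (h ▸ h2)
      have hpe := hprop e ⟨he, Or.inr h1, Or.inr h2⟩ hne1 hne2
      rcases h3 with h3 | h3
      · exact hpe.1 h3
      · exact hpe.2 h3
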